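/- Let d ≥ 1 and let M = (M_i)_{i∈I} be a POVM on ℂ^d (a finite family of positive semidefinite d×d complex matrices with ∑_i M_i = 1). Let |p⟩, |q⟩ be unit vectors in ℂ^d such that the diagonal entries of the rank-one projectors |p⟩⟨p| and |q⟩⟨q| coincide (as is the case for tensor products of Pauli X and Y eigenstates), and set δ = |p⟩⟨p| − |q⟩⟨q| ≠ 0. Then the coherence strength satisfies CS^{AC}(M) ≥ TVD(Pr(·|p), Pr(·|q)) / (d · ‖δ‖_HS), where Pr(i|p) = tr(M_i |p⟩⟨p|) and Pr(i|q) = tr(M_i |q⟩⟨q|). -/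

import Mathlib

open scoped BigOperators ComplexOrder

/-- Hilbert–Schmidt (Frobenius) norm of a square complex matrix. -/
noncomputable def hsNorm {n : Type*} [Fintype n] (A : Matrix n n ℂ) : ℝ :=
  Real.sqrt (∑ i, ∑ j, ‖A i j‖ ^ 2)

/-- Total variation distance between two real-valued distributions on a finite set. -/
noncomputable def tvd {I : Type*} [Fintype I] (p q : I → ℝ) : ℝ :=
  (1 / 2) * ∑ i, |p i - q i|

/-- Average-case distance between two POVMs (with the same finite outcome set) on `ℂ^d`. -/
noncomputable def dAV {I : Type*} [Fintype I] {d : ℕ}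
    (M P : I → Matrix (Fin d) (Fin d) ℂ) : ℝ :=
  (1 / (2 * (d : ℝ))) *
    ∑ i, Real.sqrt (hsNorm (M i - P i) ^ 2 + ‖(M i - P i).trace‖ ^ 2)

/-- Rank-one projector `|v⟩⟨v|` onto a vector `v`. -/
noncomputable def proj {d : ℕ} (v : Fin d → ℂ) : Matrix (Fin d) (Fin d) ℂ :=
  Matrix.vecMulVec v (star v)

lemma hsNorm_nonneg {n : Type*} [Fintype n] (A : Matrix n n ℂ) : 0 ≤ hsNorm A :=
  Real.sqrt_nonneg _

lemma abs_trace_mul_le {d : ℕ} (A B : Matrix (Fin d) (Fin d) ℂ) :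
    ‖(A * B).trace‖ ≤ hsNorm A * hsNorm B := by
  have h1 : ‖(A * B).trace‖
      ≤ ∑ x : Fin d × Fin d, ‖A x.1 x.2‖ * ‖B x.2 x.1‖ := by
    rw [Fintype.sum_prod_type]
    calc ‖(A * B).trace‖
        = ‖∑ k, ∑ j, A k j * B j k‖ := by
          simp [Matrix.trace, Matrix.diag, Matrix.mul_apply]
      _ ≤ ∑ k, ‖∑ j, A k j * B j k‖ := norm_sum_le _ _
      _ ≤ ∑ k, ∑ j, ‖A k j * B j k‖ :=
          Finset.sum_le_sum fun k _ => norm_sum_le _ _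
      _ = ∑ k, ∑ j, ‖A k j‖ * ‖B j k‖ := by simp [map_mul]
  refine h1.trans ?_
  set f : Fin d × Fin d → ℝ := fun x => ‖A x.1 x.2‖
  set g : Fin d × Fin d → ℝ := fun x => ‖B x.2 x.1‖
  have hcs := Finset.sum_mul_sq_le_sq_mul_sq Finset.univ f g
  have hnn : 0 ≤ ∑ x, f x * g x :=
    Finset.sum_nonneg fun x _ => mul_nonneg (norm_nonneg _) (norm_nonneg _)
  have h2 : ∑ x, f x * g x ≤ Real.sqrt ((∑ x, f x ^ 2) * (∑ x, g x ^ 2)) := by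
    have := Real.sqrt_le_sqrt hcs
    rwa [Real.sqrt_sq hnn] at this
  refine h2.trans_eq ?_
  rw [Real.sqrt_mul (Finset.sum_nonneg fun x _ => sq_nonneg _)]
  unfold hsNorm
  congr 1
  · rw [Fintype.sum_prod_type]
  · rw [Fintype.sum_prod_type]
    congr 1
    rw [Finset.sum_comm]

lemma hsNorm_pos {d : ℕ} {A : Matrix (Fin d) (Fin d) ℂ} (hA : A ≠ 0) : 0 < hsNorm A := by
  rw [hsNorm, Real.sqrt_pos]
  obtain ⟨k, j, hkj⟩ : ∃ k j, A k j ≠ 0 := by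
    by_contra h
    push_neg at h
    exact hA (by ext k j; simpa using h k j)
  have hterm : 0 < ‖A k j‖ ^ 2 := pow_pos (norm_pos_iff.mpr hkj) 2
  calc (0:ℝ) < ‖A k j‖ ^ 2 := hterm
    _ ≤ ∑ j', ‖A k j'‖ ^ 2 :=
        Finset.single_le_sum (f := fun j' => ‖A k j'‖ ^ 2)
          (fun i _ => sq_nonneg _) (Finset.mem_univ j)
    _ ≤ ∑ i, ∑ j', ‖A i j'‖ ^ 2 :=
        Finset.single_le_sum (f := fun i => ∑ j', ‖A i j'‖ ^ 2)
          (fun i _ => Finset.sum_nonneg fun _ _ => sq_nonneg _)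
          (Finset.mem_univ k)

lemma trace_diagonal_mul {d : ℕ} (D : Fin d → ℂ) (δ : Matrix (Fin d) (Fin d) ℂ)
    (h : ∀ j, δ j j = 0) : (Matrix.diagonal D * δ).trace = 0 := by
  simp [Matrix.trace, Matrix.diag, Matrix.mul_apply, Matrix.diagonal_apply, h]

lemma hsNorm_le_sqrt {d : ℕ} (A : Matrix (Fin d) (Fin d) ℂ) (t : ℝ) :
    hsNorm A ≤ Real.sqrt (hsNorm A ^ 2 + t ^ 2) := by
  nth_rewrite 1 [← Real.sqrt_sq (hsNorm_nonneg A)]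
  exact Real.sqrt_le_sqrt (le_add_of_nonneg_right (sq_nonneg _))


/-- for a POVM `M` on `ℂ^d` and unit vectors `p`, `q` whose rank-one
projectors have identical diagonals and `δ = |p⟩⟨p| - |q⟩⟨q| ≠ 0`, the coherence strength
`CS^AC(M) = d_AV(M, Φ_dep(M))` is lower bounded by
`TVD(Pr(·|p), Pr(·|q)) / (d ‖δ‖_HS)`. -/
theorem coherence_strength_lower_bound
    {I : Type*} [Fintype I] {d : ℕ} (hd : 1 ≤ d)
    (M : I → Matrix (Fin d) (Fin d) ℂ)
    (hpsd : ∀ i, (M i).PosSemidef) (hsum : ∑ i, M i = 1)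
    (p q : Fin d → ℂ)
    (hp : ∑ j, ‖p j‖ ^ 2 = 1) (hq : ∑ j, ‖q j‖ ^ 2 = 1)
    (hdiag : ∀ j, proj p j j = proj q j j)
    (hδ : proj p - proj q ≠ 0) :
    dAV M (fun i => Matrix.diagonal (Matrix.diag (M i))) ≥
      tvd (fun i => ((M i * proj p).trace).re) (fun i => ((M i * proj q).trace).re) /
        ((d : ℝ) * hsNorm (proj p - proj q)) := by
  set δ := proj p - proj q with hδdef
  have hδdiag : ∀ j, δ j j = 0 := fun j => by
    simp [hδdef, Matrix.sub_apply, hdiag j]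
  have hδpos : 0 < hsNorm δ := hsNorm_pos hδ
  have hdpos : (0:ℝ) < d := by exact_mod_cast hd
  set D : I → Matrix (Fin d) (Fin d) ℂ := fun i => Matrix.diagonal (Matrix.diag (M i)) with hD
  set s : I → ℝ := fun i =>
    Real.sqrt (hsNorm (M i - D i) ^ 2 + ‖(M i - D i).trace‖ ^ 2) with hs
  have key : ∀ i, |((M i * proj p).trace).re - ((M i * proj q).trace).re| ≤
      s i * hsNorm δ := by
    intro i
    have h0 : (D i * δ).trace = 0 := trace_diagonal_mul _ _ hδdiag
    have e : ((M i - D i) * δ).trace = (M i * proj p).trace - (M i * proj q).trace := by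
      rw [Matrix.sub_mul, Matrix.trace_sub, h0, sub_zero, hδdef, Matrix.mul_sub,
        Matrix.trace_sub]
    calc |((M i * proj p).trace).re - ((M i * proj q).trace).re|
        = |(((M i - D i) * δ).trace).re| := by rw [e, Complex.sub_re]
      _ ≤ ‖((M i - D i) * δ).trace‖ := Complex.abs_re_le_norm _
      _ ≤ hsNorm (M i - D i) * hsNorm δ := abs_trace_mul_le _ _
      _ ≤ s i * hsNorm δ := by
          have := hsNorm_le_sqrt (M i - D i) (‖(M i - D i).trace‖)
          exact mul_le_mul_of_nonneg_right this (le_of_lt hδpos)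
  rw [ge_iff_le, div_le_iff₀ (by positivity)]
  calc tvd (fun i => ((M i * proj p).trace).re) (fun i => ((M i * proj q).trace).re)
      ≤ (1/2 : ℝ) * ∑ i, s i * hsNorm δ := by
        unfold tvd
        gcongr with i hi
        exact key i
    _ = (1/2 : ℝ) * ((∑ i, s i) * hsNorm δ) := by rw [← Finset.sum_mul]
    _ = (1 / (2 * (d:ℝ))) * (∑ i, s i) * ((d:ℝ) * hsNorm δ) := by
        field_simp
    _ = dAV M D * ((d:ℝ) * hsNorm δ) := by rw [dAV]
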